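/- Let B(X_1, …, X_m) be the subset graph of the vertex sets X_i = V(T_i) of the subtrees T_1, …, T_m obtained from partitioning the edge set of a tree T into m edge-disjoint subtrees. Then B is a tree with m set nodes and at most m − 1 connector nodes. -/

import Mathlib

open SimpleGraph in
private lemma aux_connected_card_le {V : Type*} [Fintype V] :
    ∀ (n : ℕ) (G : SimpleGraph V), G.edgeSet.ncard = n → G.Connected →
      Fintype.card V ≤ n + 1 ∧ (Fintype.card V = n + 1 → G.IsAcyclic) := by
  intro n
  induction n using Nat.strong_induction_on with
  | _ n IH =>
    intro G hn hc
    classical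
    by_cases hac : G.IsAcyclic
    · have ht : G.IsTree := ⟨hc, hac⟩
      have hcard := ht.card_edgeFinset
      have hfc : G.edgeFinset.card = G.edgeSet.ncard := (Set.ncard_eq_toFinset_card' _).symm
      rw [hfc, hn] at hcard
      exact ⟨le_of_eq hcard.symm, fun _ => hac⟩
    · rw [isAcyclic_iff_forall_adj_isBridge] at hac
      push_neg at hac
      obtain ⟨v, w, hadj, hbr⟩ := hac
      have hvw : s(v, w) ∈ G.edgeSet := hadj
      set G' := G \ fromEdgeSet {s(v, w)} with hG'
      have hreach : G'.Reachable v w := by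
        by_contra h
        exact hbr h
      have hstep : ∀ a b : V, G.Adj a b → G'.Reachable a b := by
        intro a b hab
        by_cases he : s(a, b) = s(v, w)
        · rw [Sym2.eq_iff] at he
          rcases he with ⟨rfl, rfl⟩ | ⟨rfl, rfl⟩
          · exact hreach
          · exact hreach.symm
        · refine Adj.reachable ?_
          rw [hG', sdiff_adj, fromEdgeSet_adj]
          exact ⟨hab, fun hx => he hx.1⟩
      have hconn' : G'.Connected := by
        rw [connected_iff]
        refine ⟨fun a b => ?_, hc.nonempty⟩
        obtain ⟨p⟩ := hc.preconnected a b
        induction p with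
        | nil => exact Reachable.refl _
        | cons h q ih => exact (hstep _ _ h).trans ih
      have hedge : G'.edgeSet = G.edgeSet \ {s(v, w)} := by
        rw [hG', edgeSet_sdiff, edgeSet_fromEdgeSet, edgeSet_sdiff_sdiff_isDiag]
      have hn' : G'.edgeSet.ncard = n - 1 := by
        rw [hedge, Set.ncard_diff_singleton_of_mem hvw, hn]
      have hn1 : 1 ≤ n := by
        rw [← hn]
        exact (Set.ncard_pos (Set.toFinite _)).2 ⟨_, hvw⟩
      have hres := IH (n - 1) (by omega) G' hn' hconn'
      exact ⟨by omega, fun hcard => absurd hcard (by omega)⟩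

open SimpleGraph in
private lemma aux_isTree_of_card {V : Type*} [Fintype V] (G : SimpleGraph V)
    (hc : G.Connected) (hcard : Fintype.card V = G.edgeSet.ncard + 1) : G.IsTree :=
  ⟨hc, (aux_connected_card_le _ G rfl hc).2 hcard⟩


open SimpleGraph in
private lemma aux_subtree_card {V : Type*} [Fintype V] [DecidableEq V]
    (T : SimpleGraph V) (hT : T.IsTree)
    (F : Set (Sym2 V)) (hsub : F ⊆ T.edgeSet)
    (hconn : ((fromEdgeSet F).induce {v | ∃ e ∈ F, v ∈ e}).Connected) :
    {v | ∃ e ∈ F, v ∈ e}.ncard = F.ncard + 1 := by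
  classical
  set S := {v | ∃ e ∈ F, v ∈ e} with hS
  set H := (fromEdgeSet F).induce S with hH
  have hadj : ∀ u v : S, H.Adj u v → T.Adj ↑u ↑v := by
    intro u v h
    rw [hH] at h
    simp only [comap_adj, Function.Embedding.coe_subtype, fromEdgeSet_adj] at h
    exact T.mem_edgeSet.1 (hsub h.1)
  let f : H →g T := ⟨fun v => ↑v, fun {u v} h => hadj u v h⟩
  have hfinj : Function.Injective f := Subtype.val_injective
  have hacH : H.IsAcyclic := by
    intro v c hc'
    exact hT.IsAcyclic (c.map f) (hc'.map hfinj)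
  have htH : H.IsTree := ⟨hconn, hacH⟩
  have hcard := htH.card_edgeFinset
  have h1 : Fintype.card ↥S = S.ncard := by
    rw [Set.ncard_eq_toFinset_card', Set.toFinset_card]
  have h2 : H.edgeFinset.card = H.edgeSet.ncard := (Set.ncard_eq_toFinset_card' _).symm
  have himg : Sym2.map (fun v : S => (v : V)) '' H.edgeSet = F := by
    ext e
    constructor
    · rintro ⟨e', he', rfl⟩
      induction e' using Sym2.ind with
      | _ u v =>
        rw [Sym2.map_pair_eq]
        have : H.Adj u v := he'
        rw [hH] at this
        simp only [comap_adj, Function.Embedding.coe_subtype, fromEdgeSet_adj] at this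
        exact this.1
    · intro he
      induction e using Sym2.ind with
      | _ a b =>
        have haT : T.Adj a b := T.mem_edgeSet.1 (hsub he)
        have haS : a ∈ S := ⟨_, he, Sym2.mem_mk_left a b⟩
        have hbS : b ∈ S := ⟨_, he, Sym2.mem_mk_right a b⟩
        refine ⟨s(⟨a, haS⟩, ⟨b, hbS⟩), ?_, by rw [Sym2.map_pair_eq]⟩
        show H.Adj _ _
        rw [hH]
        simp only [comap_adj, Function.Embedding.coe_subtype, fromEdgeSet_adj]
        exact ⟨he, haT.ne⟩
  have h3 : H.edgeSet.ncard = F.ncard := by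
    rw [← himg, Set.ncard_image_of_injective _ (Sym2.map.injective Subtype.val_injective)]
  rw [← h1, ← hcard, h2, h3]

/-- If the edge set of a tree `T` is partitioned into `m` blocks, each
inducing a connected subtree with vertex set `X i`, then the subset graph
`B(X₁, …, X_m)` (set nodes `Fin m`, connector nodes `C = ⋃_{i≠j} Xᵢ ∩ Xⱼ`, edges
between `sᵢ` and the connector nodes of `Xᵢ`) is a tree with `m` set nodes and at most
`m - 1` connector nodes. -/

theorem subset_graph_of_tree_partition {V : Type*} [Fintype V] [DecidableEq V]
    (T : SimpleGraph V) (hT : T.IsTree)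
    (m : ℕ) (hm : 1 ≤ m) (E : Fin m → Set (Sym2 V))
    (hsub : ∀ i, E i ⊆ T.edgeSet)
    (hdisj : ∀ i j, i ≠ j → Disjoint (E i) (E j))
    (hcover : (⋃ i, E i) = T.edgeSet)
    (hconn : ∀ i, ((SimpleGraph.fromEdgeSet (E i)).induce {v | ∃ e ∈ E i, v ∈ e}).Connected)
    (X : Fin m → Set V) (hX : ∀ i, X i = {v | ∃ e ∈ E i, v ∈ e})
    (C : Set V) (hC : C = {v | ∃ i j, i ≠ j ∧ v ∈ X i ∧ v ∈ X j}) :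
    (SimpleGraph.fromRel (fun a b : Fin m ⊕ ↥C =>
        ∃ (i : Fin m) (c : ↥C), a = Sum.inl i ∧ b = Sum.inr c ∧ (c : V) ∈ X i)).IsTree ∧
    C.ncard ≤ m - 1 := by
  classical
  set B := SimpleGraph.fromRel (fun a b : Fin m ⊕ ↥C =>
      ∃ (i : Fin m) (c : ↥C), a = Sum.inl i ∧ b = Sum.inr c ∧ (c : V) ∈ X i) with hB
  have hXE : ∀ i v, v ∈ X i ↔ ∃ e ∈ E i, v ∈ e := fun i v => by rw [hX i]; rfl
  have hEedge : ∀ i, ∃ e, e ∈ E i := by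
    intro i
    obtain ⟨⟨v, hv⟩⟩ := (hconn i).nonempty
    obtain ⟨e, he, _⟩ := hv
    exact ⟨e, he⟩
  have hXne : ∀ i, ∃ v, v ∈ X i := by
    intro i
    obtain ⟨⟨v, hv⟩⟩ := (hconn i).nonempty
    exact ⟨v, (hXE i v).2 hv⟩
  -- every vertex is in some X i
  have hexadj : ∃ a b : V, T.Adj a b := by
    obtain ⟨e0, he0⟩ := hEedge ⟨0, hm⟩
    have h := hsub _ he0
    induction e0 using Sym2.ind with
    | _ a b => exact ⟨a, b, T.mem_edgeSet.1 h⟩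
  have hcov : ∀ v : V, ∃ i, v ∈ X i := by
    intro v
    obtain ⟨a, b, hab⟩ := hexadj
    have hvu : ∃ u, T.Adj v u := by
      rcases eq_or_ne v a with rfl | hva
      · exact ⟨b, hab⟩
      · obtain ⟨p⟩ := hT.isConnected.preconnected v a
        cases p with
        | nil => exact absurd rfl hva
        | cons h q => exact ⟨_, h⟩
    obtain ⟨u, hu⟩ := hvu
    have : s(v, u) ∈ ⋃ i, E i := by rw [hcover]; exact hu
    obtain ⟨i, hi⟩ := Set.mem_iUnion.1 this
    exact ⟨i, (hXE i v).2 ⟨_, hi, Sym2.mem_mk_left v u⟩⟩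
  haveI : Nonempty V := ⟨hexadj.choose⟩
  have hV1 : 1 ≤ Fintype.card V := Fintype.card_pos
  -- degree function
  set d : V → ℕ := fun v => (Finset.univ.filter fun i => v ∈ X i).card with hd
  have hd1 : ∀ v, 1 ≤ d v := by
    intro v
    obtain ⟨i, hi⟩ := hcov v
    exact Finset.card_pos.2 ⟨i, by simp [hd, hi]⟩
  have hXcard : ∀ i, (X i).ncard = (E i).ncard + 1 := by
    intro i
    rw [hX i]
    exact aux_subtree_card T hT (E i) (hsub i) (hconn i)
  have hsum1 : ∑ i, (X i).ncard = ∑ v, d v := by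
    have h1 : ∀ i, (X i).ncard = ∑ v, if v ∈ X i then 1 else 0 := by
      intro i
      rw [Set.ncard_eq_toFinset_card', ← Finset.card_filter]
      congr 1
      ext v; simp
    have h2 : ∀ v, d v = ∑ i, if v ∈ X i then 1 else 0 := fun v =>
      Finset.card_filter _ _
    simp only [h1, h2]
    exact Finset.sum_comm
  have hsum2 : ∑ i, (E i).ncard = Fintype.card V - 1 := by
    have hdisj' : ∀ i ∈ Finset.univ, ∀ j ∈ Finset.univ, i ≠ j →
        Disjoint ((E i).toFinset) ((E j).toFinset) := by
      intro i _ j _ hij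
      rw [Set.disjoint_toFinset]
      exact hdisj i j hij
    have hun : Finset.univ.biUnion (fun i => (E i).toFinset) = T.edgeFinset := by
      ext e
      simp only [Finset.mem_biUnion, Finset.mem_univ, true_and, Set.mem_toFinset,
        SimpleGraph.mem_edgeFinset, ← hcover, Set.mem_iUnion]
    have hbu := Finset.card_biUnion hdisj'
    rw [hun] at hbu
    have hTc := hT.card_edgeFinset
    have : ∀ i, (E i).toFinset.card = (E i).ncard := fun i => (Set.ncard_eq_toFinset_card' _).symm
    simp only [this] at hbu
    omega
  have hdsum : ∑ v, d v = Fintype.card V + m - 1 := by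
    rw [← hsum1]
    have h1 : ∑ i, (X i).ncard = ∑ i, ((E i).ncard + 1) :=
      Finset.sum_congr rfl fun i _ => hXcard i
    rw [h1, Finset.sum_add_distrib, hsum2]
    simp only [Finset.sum_const, Finset.card_univ, Fintype.card_fin, smul_eq_mul, mul_one]
    omega
  have hS1 : ∑ v, (d v - 1) = m - 1 := by
    have h1 : ∑ v, d v = ∑ v, ((d v - 1) + 1) :=
      Finset.sum_congr rfl fun v _ => (Nat.sub_add_cancel (hd1 v)).symm
    rw [Finset.sum_add_distrib] at h1
    simp only [Finset.sum_const, Finset.card_univ, smul_eq_mul, mul_one] at h1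
    omega
  have hCd : ∀ v, v ∈ C ↔ 2 ≤ d v := by
    intro v
    rw [hC]
    constructor
    · rintro ⟨i, j, hij, hvi, hvj⟩
      have h1 : 1 < (Finset.univ.filter fun i => v ∈ X i).card :=
        Finset.one_lt_card.2 ⟨i, Finset.mem_filter.mpr ⟨Finset.mem_univ _, hvi⟩, j,
          Finset.mem_filter.mpr ⟨Finset.mem_univ _, hvj⟩, hij⟩
      have h2 : 1 < d v := h1
      omega
    · intro h
      obtain ⟨i, hi, j, hj, hij⟩ := Finset.one_lt_card.1 (by omega : 1 < d v)
      simp only [Finset.mem_filter] at hi hj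
      exact ⟨i, j, hij, hi.2, hj.2⟩
  have hCf : C.toFinset = Finset.univ.filter fun v => 2 ≤ d v := by
    ext v; simp [Set.mem_toFinset, hCd v]
  have hCcard : C.ncard = C.toFinset.card := Set.ncard_eq_toFinset_card' _
  have hCle : C.toFinset.card ≤ m - 1 := by
    calc C.toFinset.card = C.toFinset.card • 1 := by rw [smul_eq_mul, mul_one]
      _ ≤ ∑ v ∈ C.toFinset, (d v - 1) := by
          apply Finset.card_nsmul_le_sum
          intro v hv
          rw [hCf, Finset.mem_filter] at hv
          omega
      _ ≤ ∑ v, (d v - 1) := Finset.sum_le_sum_of_subset (Finset.subset_univ _)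
      _ = m - 1 := hS1
  -- edge sum over C
  have hdCsum : ∑ v ∈ C.toFinset, d v = (m - 1) + C.toFinset.card := by
    have h1 : ∑ v ∈ C.toFinset, (d v - 1) = m - 1 := by
      rw [← hS1]
      apply Finset.sum_subset (Finset.subset_univ _)
      intro v _ hv
      rw [hCf, Finset.mem_filter] at hv
      have := hd1 v
      have h2 : ¬ 2 ≤ d v := fun h => hv ⟨Finset.mem_univ v, h⟩
      omega
    have h2 : ∑ v ∈ C.toFinset, d v = ∑ v ∈ C.toFinset, ((d v - 1) + 1) :=
      Finset.sum_congr rfl fun v _ => (Nat.sub_add_cancel (hd1 v)).symm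
    rw [h2, Finset.sum_add_distrib, h1]
    simp
  -- edge finset of B
  set P : Finset (Fin m × ↥C) := Finset.univ.filter (fun p => (p.2 : V) ∈ X p.1) with hP
  have hPcard : P.card = ∑ v ∈ C.toFinset, d v := by
    rw [hP, Finset.card_filter]
    rw [Fintype.sum_prod_type]
    rw [Finset.sum_comm]
    have h1 : ∀ c : ↥C, ∑ i : Fin m, (if (c : V) ∈ X i then 1 else 0) = d (c : V) := fun c =>
      (Finset.card_filter _ _).symm
    rw [Finset.sum_congr rfl fun c _ => h1 c]
    rw [← Finset.sum_coe_sort C.toFinset d]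
    exact Fintype.sum_equiv (Equiv.subtypeEquivRight fun v => Set.mem_toFinset.symm)
      _ _ (fun c => rfl)
  have hBedge : B.edgeFinset = P.image fun p => s(Sum.inl p.1, Sum.inr p.2) := by
    ext e
    induction e using Sym2.ind with
    | _ a b =>
      simp only [SimpleGraph.mem_edgeFinset, Finset.mem_image, SimpleGraph.mem_edgeSet, hB,
        SimpleGraph.fromRel_adj]
      constructor
      · rintro ⟨hne, (⟨i, c, rfl, rfl, hci⟩ | ⟨i, c, rfl, rfl, hci⟩)⟩
        · exact ⟨(i, c), by simp [hP, hci], rfl⟩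
        · exact ⟨(i, c), by simp [hP, hci], Sym2.eq_swap⟩
      · rintro ⟨⟨i, c⟩, hp, he⟩
        rw [hP, Finset.mem_filter] at hp
        rw [Sym2.eq_iff] at he
        rcases he with ⟨ha, hb⟩ | ⟨ha, hb⟩
        · subst ha; subst hb
          exact ⟨by simp, Or.inl ⟨i, c, rfl, rfl, hp.2⟩⟩
        · subst ha; subst hb
          exact ⟨by simp, Or.inr ⟨i, c, rfl, rfl, hp.2⟩⟩
  have hBecard : B.edgeFinset.card = P.card := by
    rw [hBedge]
    apply Finset.card_image_of_injOn
    intro p _ q _ hpq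
    rw [Sym2.eq_iff] at hpq
    rcases hpq with ⟨h1, h2⟩ | ⟨h1, h2⟩
    · exact Prod.ext (Sum.inl.inj h1) (Sum.inr.inj h2)
    · exact absurd h1 (by simp)
  -- connectivity
  have hlink : ∀ i j : Fin m, ∀ v : V, v ∈ X i → v ∈ X j →
      B.Reachable (Sum.inl i) (Sum.inl j) := by
    intro i j v hvi hvj
    rcases eq_or_ne i j with rfl | hij
    · exact SimpleGraph.Reachable.refl _
    · have hvC : v ∈ C := by rw [hC]; exact ⟨i, j, hij, hvi, hvj⟩
      have h1 : B.Adj (Sum.inl i) (Sum.inr ⟨v, hvC⟩) := by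
        rw [hB, SimpleGraph.fromRel_adj]
        exact ⟨by simp, Or.inl ⟨i, ⟨v, hvC⟩, rfl, rfl, hvi⟩⟩
      have h2 : B.Adj (Sum.inl j) (Sum.inr ⟨v, hvC⟩) := by
        rw [hB, SimpleGraph.fromRel_adj]
        exact ⟨by simp, Or.inl ⟨j, ⟨v, hvC⟩, rfl, rfl, hvj⟩⟩
      exact h1.reachable.trans h2.symm.reachable
  have hwalk : ∀ {u w : V} (p : T.Walk u w) (i j : Fin m), u ∈ X i → w ∈ X j →
      B.Reachable (Sum.inl i) (Sum.inl j) := by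
    intro u w p
    induction p with
    | nil => exact fun i j hi hj => hlink i j _ hi hj
    | @cons u u' w h q ih =>
      intro i j hi hj
      have : s(u, u') ∈ ⋃ k, E k := by rw [hcover]; exact h
      obtain ⟨k, hk⟩ := Set.mem_iUnion.1 this
      have hu : u ∈ X k := (hXE k u).2 ⟨_, hk, Sym2.mem_mk_left u u'⟩
      have hu' : u' ∈ X k := (hXE k u').2 ⟨_, hk, Sym2.mem_mk_right u u'⟩
      exact (hlink i k u hi hu).trans (ih k j hu' hj)
  have hBconn : B.Connected := by
    rw [SimpleGraph.connected_iff]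
    refine ⟨?_, ⟨Sum.inl ⟨0, hm⟩⟩⟩
    have hnode : ∀ a : Fin m ⊕ ↥C, ∃ i, B.Reachable a (Sum.inl i) := by
      rintro (i | c)
      · exact ⟨i, SimpleGraph.Reachable.refl _⟩
      · obtain ⟨i, hci⟩ := hcov ↑c
        refine ⟨i, SimpleGraph.Adj.reachable ?_⟩
        rw [hB, SimpleGraph.fromRel_adj]
        exact ⟨by simp, Or.inr ⟨i, c, rfl, rfl, hci⟩⟩
    intro a b
    obtain ⟨i, hai⟩ := hnode a
    obtain ⟨j, hbj⟩ := hnode b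
    obtain ⟨u, hu⟩ := hXne i
    obtain ⟨w, hw⟩ := hXne j
    obtain ⟨p⟩ := hT.isConnected.preconnected u w
    exact hai.trans ((hwalk p i j hu hw).trans hbj.symm)
  constructor
  · apply aux_isTree_of_card B hBconn
    have h1 : B.edgeSet.ncard = B.edgeFinset.card := Set.ncard_eq_toFinset_card' _
    have h2 : Fintype.card (Fin m ⊕ ↥C) = m + C.toFinset.card := by
      rw [Fintype.card_sum, Fintype.card_fin, Set.toFinset_card]
    rw [h1, hBecard, hPcard, hdCsum, h2]
    omega
  · rw [hCcard]; exact hCle
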